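/- Let Ô : ℝⁿ → ℝ^{n_y} and M̂ : ℝⁿ → ℝ^{n_w} be linear maps, y ∈ ℝ^{n_y}, v₀ ∈ ℝⁿ, and let Γ_obs, Γ̂ and R be symmetric positive definite matrices of appropriate sizes. Let (λ_k)_{k∈ℕ} ⊂ ℝ₊ be strictly monotonically increasing with λ_k → ∞, and for each k let v_k be the unique global minimizer of J_{λ_k}(v) = ½‖Ô v − y‖²_{Γ_obs} + (λ_k/2)‖M̂ v‖²_{Γ̂} + ½‖v − v₀‖²_R. Then every accumulation point of the sequence (v_k) equals the unique global minimizer of ½‖Ô v − y‖²_{Γ_obs} + ½‖v − v₀‖²_R over the subspace {v : M̂ v = 0}. -/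

import Mathlib

open Matrix Filter

/-- Squared weighted norm `‖x‖_A² = ⟨x, A⁻¹ x⟩` for an s.p.d. matrix `A`. -/
noncomputable def wsq {ι : Type*} [Fintype ι] [DecidableEq ι]
    (A : Matrix ι ι ℝ) (x : ι → ℝ) : ℝ :=
  x ⬝ᵥ (A⁻¹ *ᵥ x)

lemma wsq_parallelogram {ι : Type*} [Fintype ι] [DecidableEq ι]
    (A : Matrix ι ι ℝ) (a b : ι → ℝ) :
    wsq A (a + b) + wsq A (a - b) = 2 * wsq A a + 2 * wsq A b := by
  simp only [wsq, Matrix.mulVec_add, Matrix.mulVec_sub, dotProduct_add, dotProduct_sub,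
    add_dotProduct, sub_dotProduct]
  ring

lemma wsq_smul {ι : Type*} [Fintype ι] [DecidableEq ι]
    (A : Matrix ι ι ℝ) (c : ℝ) (x : ι → ℝ) :
    wsq A (c • x) = c ^ 2 * wsq A x := by
  simp only [wsq, Matrix.mulVec_smul, smul_dotProduct, dotProduct_smul, smul_eq_mul]
  ring

lemma wsq_zero {ι : Type*} [Fintype ι] [DecidableEq ι]
    (A : Matrix ι ι ℝ) : wsq A (0 : ι → ℝ) = 0 := by
  simp [wsq]

lemma wsq_nonneg {ι : Type*} [Fintype ι] [DecidableEq ι]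
    {A : Matrix ι ι ℝ} (hA : A.PosDef) (x : ι → ℝ) : 0 ≤ wsq A x := by
  simpa [wsq] using hA.inv.posSemidef.dotProduct_mulVec_nonneg x

lemma wsq_pos {ι : Type*} [Fintype ι] [DecidableEq ι]
    {A : Matrix ι ι ℝ} (hA : A.PosDef) {x : ι → ℝ} (hx : x ≠ 0) : 0 < wsq A x := by
  simpa [wsq] using hA.inv.dotProduct_mulVec_pos hx

lemma wsq_continuous {ι : Type*} [Fintype ι] [DecidableEq ι]
    (A : Matrix ι ι ℝ) : Continuous (wsq A) := by
  have : wsq A = fun x => ∑ i, x i * ∑ j, A⁻¹ i j * x j := by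
    funext x
    simp [wsq, dotProduct, Matrix.mulVec]
  rw [this]
  fun_prop

/-- Convergence of the penalty method in the linear setting (Theorem 1): every
accumulation point of the sequence of unique global minimizers `v_k` of the
penalized losses `J_{λ_k}` with `λ_k → ∞` equals the unique global minimizer of
the regularized data-misfit over the subspace `{v : M̂ v = 0}`. -/
theorem penalty_method_linear_convergence
    {n ny nw : ℕ}
    (Ohat : (Fin n → ℝ) →ₗ[ℝ] (Fin ny → ℝ))
    (Mhat : (Fin n → ℝ) →ₗ[ℝ] (Fin nw → ℝ))
    (y : Fin ny → ℝ) (v₀ : Fin n → ℝ)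
    (Γobs : Matrix (Fin ny) (Fin ny) ℝ) (Γhat : Matrix (Fin nw) (Fin nw) ℝ)
    (R : Matrix (Fin n) (Fin n) ℝ)
    (hΓobs : Γobs.PosDef) (hΓhat : Γhat.PosDef) (hR : R.PosDef)
    (lam : ℕ → ℝ) (hlampos : ∀ k, 0 < lam k) (hlammono : StrictMono lam)
    (hlamtop : Tendsto lam atTop atTop)
    (v : ℕ → Fin n → ℝ)
    (hmin : ∀ k, ∀ w : Fin n → ℝ,
      (1/2) * wsq Γobs (Ohat (v k) - y) + (lam k / 2) * wsq Γhat (Mhat (v k))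
          + (1/2) * wsq R (v k - v₀)
        ≤ (1/2) * wsq Γobs (Ohat w - y) + (lam k / 2) * wsq Γhat (Mhat w)
          + (1/2) * wsq R (w - v₀))
    (vbar : Fin n → ℝ) (hacc : MapClusterPt vbar atTop v) :
    (Mhat vbar = 0 ∧ ∀ w : Fin n → ℝ, Mhat w = 0 →
        (1/2) * wsq Γobs (Ohat vbar - y) + (1/2) * wsq R (vbar - v₀)
          ≤ (1/2) * wsq Γobs (Ohat w - y) + (1/2) * wsq R (w - v₀)) ∧
    ∀ w : Fin n → ℝ,
      (Mhat w = 0 ∧ ∀ z : Fin n → ℝ, Mhat z = 0 →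
          (1/2) * wsq Γobs (Ohat w - y) + (1/2) * wsq R (w - v₀)
            ≤ (1/2) * wsq Γobs (Ohat z - y) + (1/2) * wsq R (z - v₀)) →
        vbar = w := by
  -- subsequence converging to vbar
  obtain ⟨ψ, hψmono, hψt⟩ := TopologicalSpace.FirstCountableTopology.tendsto_subseq hacc
  set F : (Fin n → ℝ) → ℝ :=
    fun w => (1/2) * wsq Γobs (Ohat w - y) + (1/2) * wsq R (w - v₀) with hF
  have hFcont : Continuous F := by
    apply Continuous.add
    · exact continuous_const.mul
        ((wsq_continuous Γobs).comp (Ohat.continuous_of_finiteDimensional.sub continuous_const))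
    · exact continuous_const.mul
        ((wsq_continuous R).comp (continuous_id.sub continuous_const))
  have hFnonneg : ∀ w, 0 ≤ F w := fun w => by
    have := wsq_nonneg hΓobs (Ohat w - y)
    have := wsq_nonneg hR (w - v₀)
    simp only [hF]; linarith
  set q : ℕ → ℝ := fun k => wsq Γhat (Mhat (v k)) with hq
  have hqnonneg : ∀ k, 0 ≤ q k := fun k => wsq_nonneg hΓhat _
  -- bound from comparing with w = 0
  have hqbound : ∀ k, q k ≤ 2 * F 0 / lam k := by
    intro k
    have h := hmin k 0
    simp only [map_zero, wsq_zero, mul_zero] at h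
    have hF0 : 0 ≤ F (v k) := hFnonneg _
    have hl := hlampos k
    rw [le_div_iff₀ hl]
    simp only [hF, map_zero] at h hF0 ⊢
    nlinarith
  have hqtendsto : Tendsto q atTop (nhds 0) :=
    squeeze_zero hqnonneg hqbound (Tendsto.div_atTop tendsto_const_nhds hlamtop)
  -- Mhat vbar = 0
  have hMbar : Mhat vbar = 0 := by
    have h1 : Tendsto (fun j => q (ψ j)) atTop (nhds 0) :=
      hqtendsto.comp (hψmono.tendsto_atTop)
    have h2 : Tendsto (fun j => q (ψ j)) atTop (nhds (wsq Γhat (Mhat vbar))) := by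
      have : Continuous fun w : Fin n → ℝ => wsq Γhat (Mhat w) :=
        (wsq_continuous Γhat).comp Mhat.continuous_of_finiteDimensional
      exact (this.tendsto vbar).comp hψt
    have h0 : wsq Γhat (Mhat vbar) = 0 := tendsto_nhds_unique h2 h1
    by_contra hne
    exact absurd h0 (ne_of_gt (wsq_pos hΓhat hne))
  -- minimality over kernel
  have hmin2 : ∀ w : Fin n → ℝ, Mhat w = 0 → F vbar ≤ F w := by
    intro w hw
    have hle : ∀ k, F (v k) ≤ F w := by
      intro k
      have h := hmin k w
      simp only [hw, wsq_zero, mul_zero] at h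
      have := mul_nonneg (le_of_lt (half_pos (hlampos k))) (hqnonneg k)
      simp only [hF] at h ⊢
      simp only [hq] at this
      linarith
    have hFt : Tendsto (fun j => F (v (ψ j))) atTop (nhds (F vbar)) :=
      (hFcont.tendsto vbar).comp hψt
    exact le_of_tendsto' hFt fun j => hle (ψ j)
  refine ⟨⟨hMbar, hmin2⟩, ?_⟩
  -- uniqueness via strict convexity
  rintro w ⟨hw0, hwmin⟩
  by_contra hne
  set m : Fin n → ℝ := (1/2 : ℝ) • (vbar + w) with hm
  have hMm : Mhat m = 0 := by
    rw [hm, _root_.map_smul, map_add, hMbar, hw0]; simp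
  -- F m < F vbar
  have hO : Ohat m - y = (1/2 : ℝ) • ((Ohat vbar - y) + (Ohat w - y)) := by
    rw [hm, _root_.map_smul, map_add]; module
  have hRv : m - v₀ = (1/2 : ℝ) • ((vbar - v₀) + (w - v₀)) := by
    rw [hm]; module
  have hdiff : (vbar - v₀) - (w - v₀) = vbar - w := by module
  have e1 : wsq Γobs (Ohat m - y)
      = (1/2) * wsq Γobs (Ohat vbar - y) + (1/2) * wsq Γobs (Ohat w - y)
        - (1/4) * wsq Γobs ((Ohat vbar - y) - (Ohat w - y)) := by
    rw [hO, wsq_smul]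
    have := wsq_parallelogram Γobs (Ohat vbar - y) (Ohat w - y)
    nlinarith [this]
  have e2 : wsq R (m - v₀)
      = (1/2) * wsq R (vbar - v₀) + (1/2) * wsq R (w - v₀)
        - (1/4) * wsq R (vbar - w) := by
    rw [hRv, wsq_smul]
    have := wsq_parallelogram R (vbar - v₀) (w - v₀)
    rw [hdiff] at this
    nlinarith [this]
  have hOnn : 0 ≤ wsq Γobs ((Ohat vbar - y) - (Ohat w - y)) := wsq_nonneg hΓobs _
  have hRpos : 0 < wsq R (vbar - w) := wsq_pos hR (sub_ne_zero.mpr hne)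
  have hFvw : F vbar = F w := le_antisymm (hmin2 w hw0) (hwmin vbar hMbar)
  have hlt : F m < F vbar := by
    have hFw := hFvw
    simp only [hF] at hFw ⊢
    rw [e1, e2]
    linarith
  exact absurd (hmin2 m hMm) (not_le.mpr hlt)
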